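/- The F-algebra R = F[x,y]/⟨xy - 1⟩ admits no order function. -/

import Mathlib

/-- An order function on an `F`-algebra `R`: `ρ : R → ℕ₀ ∪ {-∞}` with
(1) `ρ f = -∞ ↔ f = 0`; (2) invariance under nonzero scalars;
(3) `ρ (f+g) ≤ max (ρ f) (ρ g)`, with equality when `ρ f ≠ ρ g`;
(4) `ρ f < ρ g` and `h ≠ 0` imply `ρ (f*h) < ρ (g*h)`;
(5) `ρ f = ρ g ≠ -∞` implies `ρ (f - λ g) < ρ g` for some scalar `λ ≠ 0`. -/
def IsOrderFunction (F : Type*) {R : Type*} [Field F] [CommRing R] [Algebra F R]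
    (ρ : R → WithBot ℕ) : Prop :=
  (∀ f : R, ρ f = ⊥ ↔ f = 0) ∧
  (∀ (l : F) (f : R), l ≠ 0 → ρ (l • f) = ρ f) ∧
  (∀ f g : R, ρ (f + g) ≤ max (ρ f) (ρ g)) ∧
  (∀ f g : R, ρ f ≠ ρ g → ρ (f + g) = max (ρ f) (ρ g)) ∧
  (∀ f g h : R, ρ f < ρ g → h ≠ 0 → ρ (f * h) < ρ (g * h)) ∧
  (∀ f g : R, ρ f = ρ g → ρ g ≠ ⊥ → ∃ l : F, l ≠ 0 ∧ ρ (f - l • g) < ρ g)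

open MvPolynomial LaurentPolynomial in
/-- The `F`-algebra `F[x,y]/⟨xy - 1⟩` admits no order function. -/
theorem no_orderFunction_on_laurent {F : Type*} [Field F] :
    ¬ ∃ ρ : (MvPolynomial (Fin 2) F ⧸
        Ideal.span {(X 0 : MvPolynomial (Fin 2) F) * X 1 - 1}) → WithBot ℕ,
      IsOrderFunction F ρ := by
  rintro ⟨ρ, h1, h2, h3, h4, h5, h6⟩
  let I : Ideal (MvPolynomial (Fin 2) F) :=
    Ideal.span {(X 0 : MvPolynomial (Fin 2) F) * X 1 - 1}
  let R := MvPolynomial (Fin 2) F ⧸ I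
  -- the evaluation into Laurent polynomials
  let φ : MvPolynomial (Fin 2) F →ₐ[F] LaurentPolynomial F :=
    aeval ![T 1, T (-1)]
  have hgen : φ ((X 0 : MvPolynomial (Fin 2) F) * X 1 - 1) = 0 := by
    show aeval ![T 1, T (-1)] _ = 0
    rw [map_sub, map_mul, map_one, aeval_X, aeval_X]
    show (T 1 : LaurentPolynomial F) * T (-1) - 1 = 0
    rw [← T_add, add_neg_cancel, T_zero, sub_self]
  have key : ∀ p : MvPolynomial (Fin 2) F,
      (Ideal.Quotient.mk I p = 0) → φ p = 0 := by
    intro p hp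
    rw [Ideal.Quotient.eq_zero_iff_mem, Ideal.mem_span_singleton] at hp
    obtain ⟨q, hq⟩ := hp
    rw [hq, map_mul, hgen, zero_mul]
  -- R is nontrivial
  have hnt : (1 : R) ≠ 0 := by
    intro h
    have := key 1 (by rw [map_one]; exact h)
    rw [map_one] at this
    exact one_ne_zero this
  -- x * y = 1
  have hxy : (Ideal.Quotient.mk I (X 0)) * (Ideal.Quotient.mk I (X 1)) = 1 := by
    have hmem : ((X 0 : MvPolynomial (Fin 2) F) * X 1 - 1) ∈ I :=
      Ideal.subset_span rfl
    have h0 : Ideal.Quotient.mk I ((X 0 : MvPolynomial (Fin 2) F) * X 1 - 1) = 0 :=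
      (Ideal.Quotient.eq_zero_iff_mem).mpr hmem
    rw [map_sub, map_mul, map_one, sub_eq_zero] at h0
    exact h0
  set x : R := Ideal.Quotient.mk I (X 0) with hxdef
  set y : R := Ideal.Quotient.mk I (X 1) with hydef
  have hx0 : x ≠ 0 := by
    intro h; rw [h, zero_mul] at hxy; exact hnt hxy.symm
  have hy0 : y ≠ 0 := by
    intro h; rw [h, mul_zero] at hxy; exact hnt hxy.symm
  -- infinite descent: no nonzero f with ρ f < ρ 1
  have descent : ∀ f : R, f ≠ 0 → ρ f < ρ 1 → False := by
    intro f hf hflt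
    have step : ∀ n : ℕ, ρ (f ^ (n + 2)) < ρ (f ^ (n + 1)) := by
      intro n
      induction n with
      | zero =>
        have := h5 f 1 f hflt hf
        rw [one_mul] at this
        calc ρ (f ^ 2) = ρ (f * f) := by rw [sq]
        _ < ρ f := this
        _ = ρ (f ^ 1) := by rw [pow_one]
      | succ k ih =>
        have := h5 (f ^ (k + 2)) (f ^ (k + 1)) f ih hf
        calc ρ (f ^ (k + 3)) = ρ (f ^ (k + 2) * f) := by rw [pow_succ]
        _ < ρ (f ^ (k + 1) * f) := this
        _ = ρ (f ^ (k + 2)) := by rw [← pow_succ]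
    exact (RelEmbedding.wellFounded_iff_isEmpty.mp wellFounded_lt).false
      (RelEmbedding.natGT (fun n => ρ (f ^ (n + 1))) (fun n => step n))
  have hone_le : ∀ f : R, f ≠ 0 → ρ 1 ≤ ρ f := by
    intro f hf
    by_contra h
    exact descent f hf (lt_of_not_ge h)
  -- ρ x = ρ 1
  have hxe : ρ x = ρ 1 := by
    refine le_antisymm ?_ (hone_le x hx0)
    by_contra h
    have hlt1 : ρ 1 < ρ x := lt_of_not_ge h
    have := h5 1 x y hlt1 hy0
    rw [one_mul, hxy] at this
    exact absurd (hone_le y hy0) (not_le_of_gt this)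
  have h1ne : ρ (1 : R) ≠ ⊥ := fun h => hnt ((h1 1).mp h)
  obtain ⟨l, hl, hllt⟩ := h6 x 1 hxe h1ne
  have hz : x - l • 1 = 0 := by
    by_contra h
    exact descent _ h hllt
  -- transfer to Laurent polynomials
  have hsm : (Ideal.Quotient.mk I) (MvPolynomial.C l) = l • (1 : R) := by
    have : (Ideal.Quotient.mk I) (MvPolynomial.C l) = algebraMap F R l := rfl
    rw [this, Algebra.algebraMap_eq_smul_one]
  have hphi : φ (X 0 - MvPolynomial.C l) = 0 := by
    apply key
    rw [map_sub, hsm, ← hxdef]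
    exact hz
  rw [map_sub, sub_eq_zero] at hphi
  have hTC : (T 1 : LaurentPolynomial F) = LaurentPolynomial.C l := by
    have h1' : φ (X 0) = T 1 := by
      show aeval ![T 1, T (-1)] (X 0) = T 1
      rw [aeval_X]; rfl
    have h2' : φ (MvPolynomial.C l) = LaurentPolynomial.C l := by
      show aeval ![T 1, T (-1)] (MvPolynomial.C l) = _
      rw [aeval_C]; rfl
    rw [h1', h2'] at hphi
    exact hphi
  -- T 1 ≠ C l
  have h' : (Finsupp.single (1 : ℤ) (1 : F)) = Finsupp.single (0 : ℤ) l :=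
    congrArg AddMonoidAlgebra.coeff hTC
  rcases (Finsupp.single_eq_single_iff _ _ _ _).mp h' with ⟨h10, -⟩ | ⟨h10, -⟩
  · exact one_ne_zero h10
  · exact one_ne_zero h10
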